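/- Let K be a field, let A and B be s-unital (not necessarily unital) K-algebras, and let R = A ⊗_K B with multiplication determined by (a₁ ⊗ b₁)(a₂ ⊗ b₂) = a₁a₂ ⊗ b₁b₂. If a ∈ A is nonzero and b ∈ B is properly infinite, then a ⊗ b is a properly infinite element of R. -/

import Mathlib

/-- `x ≼ y` for square matrices over a (possibly nonunital) ring: `x = α * y * β`
for some rectangular matrices `α`, `β`. -/
def MatSub {R : Type*} [NonUnitalRing R] {k n : ℕ}
    (x : Matrix (Fin k) (Fin k) R) (y : Matrix (Fin n) (Fin n) R) : Prop :=
  ∃ (α : Matrix (Fin k) (Fin n) R) (β : Matrix (Fin n) (Fin k) R), x = α * y * β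

/-- `a ⊕ b ≼ c` for ring elements: the block-diagonal matrix `diag(a, b)` satisfies
`diag(a,b) ≼ (c)` as square matrices. -/
def PairSub {R : Type*} [NonUnitalRing R] (a b c : R) : Prop :=
  MatSub !![a, 0; 0, b] !![c]

/-- `a ≼ b` for ring elements: `a = α * b * β` for some ring elements. -/
def ElemSub {R : Type*} [NonUnitalRing R] (a b : R) : Prop :=
  ∃ α β : R, a = α * b * β

/-- `K(a) = { x | a ⊕ x ≼ a }`. -/
def KSet {R : Type*} [NonUnitalRing R] (a : R) : Set R := { x | PairSub a x a }

/-- An element `a` is infinite if `a ⊕ x ≼ a` for some nonzero `x`, i.e. `K(a) ≠ 0`. -/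
def IsInfiniteElem {R : Type*} [NonUnitalRing R] (a : R) : Prop :=
  ∃ x : R, x ≠ 0 ∧ PairSub a x a

/-- An element `a` is properly infinite if `a ≠ 0` and `a ⊕ a ≼ a`. -/
def IsProperlyInfiniteElem {R : Type*} [NonUnitalRing R] (a : R) : Prop :=
  a ≠ 0 ∧ PairSub a a a

/-- A ring is s-unital if each element `x` admits `u, v` with `u * x = x` and `x * v = x`. -/
def IsSUnitalRing (R : Type*) [NonUnitalRing R] : Prop :=
  ∀ x : R, (∃ u : R, u * x = x) ∧ (∃ v : R, x * v = x)

/-- `b` belongs to `RaR`, the set of finite sums `Σ xᵢ * a * yᵢ`. -/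
def MemRaR {R : Type*} [NonUnitalRing R] (a b : R) : Prop :=
  ∃ (n : ℕ) (x y : Fin n → R), b = ∑ i, x i * a * y i

/-- A (possibly nonunital) ring is a division ring: it has a nonzero multiplicative identity
with respect to which every nonzero element is two-sided invertible. -/
def IsDivisionRingPred (R : Type*) [NonUnitalRing R] : Prop :=
  ∃ u : R, u ≠ 0 ∧ (∀ x : R, u * x = x ∧ x * u = x) ∧
    ∀ x : R, x ≠ 0 → ∃ y : R, x * y = u ∧ y * x = u

/-- A ring `R` is purely infinite if no quotient of `R` by a two-sided ideal is a division
ring, and `b ∈ RaR` implies `b = x * a * y` for some `x, y ∈ R`. -/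
def IsPurelyInfiniteRing (R : Type*) [NonUnitalRing R] : Prop :=
  (∀ I : TwoSidedIdeal R, ¬ IsDivisionRingPred I.ringCon.Quotient) ∧
  ∀ a b : R, MemRaR a b → ElemSub b a

/-- A ring is properly purely infinite if every nonzero element is properly infinite. -/
def IsProperlyPurelyInfiniteRing (R : Type*) [NonUnitalRing R] : Prop :=
  ∀ a : R, a ≠ 0 → IsProperlyInfiniteElem a

/-- An idempotent `e` is infinite if `e ∼ f ≤ e` for some idempotent `f ≠ e`. -/
def IsInfiniteIdem {R : Type*} [NonUnitalRing R] (e : R) : Prop :=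
  IsIdempotentElem e ∧ ∃ f : R, IsIdempotentElem f ∧ (∃ x y : R, e = x * y ∧ f = y * x) ∧
    e * f = f ∧ f * e = f ∧ f ≠ e

/-- An exchange ring: for each `x` there are an idempotent `e` and elements `r, s` with
`e = x * r = x + s - x * s`. -/
def IsExchangeRing (R : Type*) [NonUnitalRing R] : Prop :=
  ∀ x : R, ∃ e r s : R, IsIdempotentElem e ∧ e = x * r ∧ e = x + s - x * s

/-- A ring has local units if every finite subset is contained in a corner `eRe`
for some idempotent `e`. -/
def HasLocalUnits (R : Type*) [NonUnitalRing R] : Prop :=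
  ∀ s : Finset R, ∃ e : R, IsIdempotentElem e ∧ ∀ x ∈ s, ∃ r : R, x = e * r * e

open scoped TensorProduct

/-- Lemma 4.1 (elementtensorpropinf): let `A`, `B` be s-unital algebras over a field `K` and
`R = A ⊗_K B` (with multiplication determined by `(a₁ ⊗ b₁)(a₂ ⊗ b₂) = a₁a₂ ⊗ b₁b₂`).
If `a ∈ A` is nonzero and `b ∈ B` is properly infinite, then `a ⊗ b` is a properly infinite
element of `R`. -/
theorem tmul_properlyInfinite {K A B : Type*} [Field K]
    [NonUnitalRing A] [Module K A] [SMulCommClass K A A] [IsScalarTower K A A]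
    [NonUnitalRing B] [Module K B] [SMulCommClass K B B] [IsScalarTower K B B]
    (hA : IsSUnitalRing A) (hB : IsSUnitalRing B)
    (a : A) (ha : a ≠ 0) (b : B) (hb : IsProperlyInfiniteElem b) :
    IsProperlyInfiniteElem (a ⊗ₜ[K] b : A ⊗[K] B) := by
  obtain ⟨hbne, αm, βm, hm⟩ := hb
  obtain ⟨⟨u, hu⟩, ⟨v, hv⟩⟩ := hA a
  constructor
  · intro h
    classical
    let bA := Module.Basis.ofVectorSpace K A
    let bB := Module.Basis.ofVectorSpace K B
    have ha' : ∃ i, bA.repr a i ≠ 0 := by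
      by_contra hc
      push_neg at hc
      apply ha
      apply bA.repr.injective
      ext i
      simp [hc i]
    obtain ⟨i, hi⟩ := ha'
    apply hbne
    apply bB.repr.injective
    ext j
    have := congrArg (fun z => (bA.tensorProduct bB).repr z (i, j)) h
    simp only [Module.Basis.tensorProduct_repr_tmul_apply, map_zero, Finsupp.coe_zero,
      Pi.zero_apply] at this
    have h2 : bB.repr b j * bA.repr a i = 0 := this
    rcases mul_eq_zero.mp h2 with h1 | h1
    · simp [h1]
    · exact absurd h1 hi
  · refine ⟨Matrix.of fun i _ => u ⊗ₜ[K] αm i 0, Matrix.of fun _ j => v ⊗ₜ[K] βm 0 j, ?_⟩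
    have key : ∀ i j, (!![b, 0; 0, b] : Matrix (Fin 2) (Fin 2) B) i j
        = αm i 0 * b * βm 0 j := by
      intro i j
      have := congrFun (congrFun hm i) j
      simpa [Matrix.mul_apply, Fin.sum_univ_one] using this
    ext i j
    simp only [Matrix.mul_apply, Fin.sum_univ_one, Matrix.of_apply, Matrix.cons_val',
      Matrix.cons_val_zero, Matrix.empty_val', Matrix.cons_val_fin_one]
    rw [Algebra.TensorProduct.tmul_mul_tmul, Algebra.TensorProduct.tmul_mul_tmul,
      hu, hv, ← key i j]
    fin_cases i <;> fin_cases j <;> simp [TensorProduct.tmul_zero]
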